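/- arXiv:2406.12636 — 4 statements merged into one kernel-verified Lean document; each statement's English description precedes it below -/
import Mathlib

section
/- If tournament (S,P) is not manipulable by any team (for instance, if (S,P) is a knockout tournament where a worse performance can never change the winner while preserving one's own rank), then the tournament system W = [(S,P),(T,Q),(U,R)] with allocation rule 𝒜′ is incentive compatible. -/
/-- A tournament system `W = [(S,P),(T,Q),(U,R)]` in the sense of the paper:
ranking methods `P`, `Q`, `R` assign natural-number ranks to teams for any set of
results; `worseS i s s'` (resp. `worseT`) means that results `s'` coincide with `s`
except for a strictly worse performance by team `i`.  The winner `p` of `(S,P)`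
also plays in `(T,Q)` but not in `(U,R)`; the winner `r` of `(U,R)` does not play
in `(T,Q)`.  The top `q` teams of `(T,Q)` receive direct slots. -/
structure System (Team ResS ResT ResU : Type) : Type where
  P : ResS → Team → ℕ
  Q : ResT → Team → ℕ
  R : ResU → Team → ℕ
  worseS : Team → ResS → ResS → Prop
  worseT : Team → ResT → ResT → Prop
  teamsS : Set Team
  teamsT : Set Team
  teamsU : Set Team
  S : ResS
  T : ResT
  U : ResU
  q : ℕ
  p : Team
  r : Team
  hp_win : P S p = 1
  hp_T : p ∈ teamsT
  hp_notU : p ∉ teamsU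
  hr_win : R U r = 1
  hr_U : r ∈ teamsU
  hr_notT : r ∉ teamsT

namespace System

variable {Team ResS ResT ResU : Type} (W : System Team ResS ResT ResU)

/-- The ranking methods are linear orders on the participants. -/
def linearRanked : Prop :=
  (∀ s, Set.InjOn (W.P s) W.teamsS) ∧ (∀ t, Set.InjOn (W.Q t) W.teamsT)

/-- The current UEFA allocation rule `𝒜`: the top `q` of `(T,Q)` qualify; moreover,
if the winner `w` of `(S,P)` has `Q_w(T) ≥ q+1` it qualifies itself; if
`Q_w(T) ≤ q−1` the vacancy goes to `r`; if `Q_w(T) = q` it goes to the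
`(q+1)`-th ranked team of `(T,Q)`. -/
def qualA (s : ResS) (t : ResT) : Set Team :=
  {i | (i ∈ W.teamsT ∧ W.Q t i ≤ W.q) ∨
    ∃ w, W.P s w = 1 ∧
      ((W.q + 1 ≤ W.Q t w ∧ i = w) ∨
       (W.Q t w + 1 ≤ W.q ∧ i = W.r) ∨
       (W.Q t w = W.q ∧ i ∈ W.teamsT ∧ W.Q t i = W.q + 1))}

/-- The modified rule `𝒜′`: all cases `Q_w(T) ≤ q` are treated uniformly, the
vacancy going to `r`. -/
def qualA' (s : ResS) (t : ResT) : Set Team :=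
  {i | (i ∈ W.teamsT ∧ W.Q t i ≤ W.q) ∨
    ∃ w, W.P s w = 1 ∧
      ((W.q + 1 ≤ W.Q t w ∧ i = w) ∨
       (W.Q t w ≤ W.q ∧ i = W.r))}

/-- The modified rule `𝒜″`: any vacancy created by the winner of `(S,P)` is filled
by the `(q+1)`-th ranked team of `(T,Q)`. -/
def qualA'' (s : ResS) (t : ResT) : Set Team :=
  {i | (i ∈ W.teamsT ∧ W.Q t i ≤ W.q) ∨
    ∃ w, W.P s w = 1 ∧
      ((W.q + 1 ≤ W.Q t w ∧ i = w) ∨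
       (W.Q t w ≤ W.q ∧ i ∈ W.teamsT ∧ W.Q t i = W.q + 1))}

/-- Definition 1: tournament `(S,P)` is manipulable by team `i`, making team `j`
the winner: some worse performance `s'` of `i` keeps `i`'s rank and promotes `j`
(originally ranked at least 2) to rank 1. -/
def manipSBy (i j : Team) : Prop :=
  ∃ s', W.worseS i W.S s' ∧ W.P W.S i = W.P s' i ∧
    2 ≤ W.P W.S j ∧ W.P s' j = 1

/-- A witness `t'` of a Definition-2 manipulation of `(T,Q)` by team `i` (ranked
`q+1` before and after), swapping teams `j` (rank `q−1 → q`) and `k`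
(rank `q → q−1`), all other ranks unchanged. -/
def manipTWitness (i j k : Team) (t' : ResT) : Prop :=
  W.worseT i W.T t' ∧
  W.Q W.T i = W.q + 1 ∧ W.Q t' i = W.q + 1 ∧
  W.Q W.T j + 1 = W.q ∧ W.Q t' j = W.q ∧
  W.Q W.T k = W.q ∧ W.Q t' k + 1 = W.q ∧
  (∀ m, m ≠ j → m ≠ k → W.Q W.T m = W.Q t' m)

/-- Definition 2: tournament `(T,Q)` is manipulable by team `i`, swapping `j` and `k`. -/
def manipTBy (i j k : Team) : Prop := ∃ t', W.manipTWitness i j k t'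

/-- Some team gains a qualification slot it would not otherwise obtain via a
Definition-1 manipulation of `(S,P)`. -/
def incompatibleS (qual : ResS → ResT → Set Team) : Prop :=
  ∃ i j s', W.worseS i W.S s' ∧ W.P W.S i = W.P s' i ∧
    2 ≤ W.P W.S j ∧ W.P s' j = 1 ∧
    i ∉ qual W.S W.T ∧ i ∈ qual s' W.T

/-- Some team gains a qualification slot it would not otherwise obtain via a
Definition-2 manipulation of `(T,Q)`.  (The ranking of the coefficient-based
tournament `(U,R)` cannot be improved by worse performance, so `(U,R)` is not
manipulable.) -/
def incompatibleT (qual : ResS → ResT → Set Team) : Prop :=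
  ∃ i j k t', W.manipTWitness i j k t' ∧
    i ∉ qual W.S W.T ∧ i ∈ qual W.S t'

/-- Incentive incompatibility of the tournament system under allocation rule `qual`:
some team can strictly enlarge its qualification outcome by a worse performance. -/
def incompatible (qual : ResS → ResT → Set Team) : Prop :=
  W.incompatibleS qual ∨ W.incompatibleT qual

end System

/-- if `(S,P)` is not manipulable by any team (e.g. a knockout
tournament), then the system with rule `𝒜′` is incentive compatible. -/
theorem statement5 {Team ResS ResT ResU : Type} (W : System Team ResS ResT ResU)
    (hlin : W.linearRanked) (hS : ∀ i j, ¬ W.manipSBy i j) :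
    ¬ W.incompatible W.qualA' := by
  rintro (⟨i, j, s', h1, h2, h3, h4, _, _⟩ | ⟨i, j, k, t', hw, hnot, hin⟩)
  · exact hS i j ⟨s', h1, h2, h3, h4⟩
  · obtain ⟨-, hiT, hit', hjT, hjt', hkT, hkt', hother⟩ := hw
    apply hnot
    rcases hin with ⟨_, hle⟩ | ⟨w, hw1, ⟨hge, rfl⟩ | ⟨hle, rfl⟩⟩
    · omega
    · exact Or.inr ⟨_, hw1, Or.inl ⟨by omega, rfl⟩⟩
    · refine Or.inr ⟨w, hw1, Or.inr ⟨?_, rfl⟩⟩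
      by_cases hj : w = j
      · subst_vars; omega
      by_cases hk : w = k
      · subst_vars; omega
      rw [hother w hj hk]; exact hle
end

section
/- If tournament (S,P) is not manipulable by any team, then the tournament system W = [(S,P),(T,Q),(U,R)] with allocation rule 𝒜″ is incentive compatible, even if tournament (T,Q) is manipulable in the sense of Definition 2. -/
/-- if `(S,P)` is not manipulable by any team, then the system
with rule `𝒜″` is incentive compatible, even if `(T,Q)` is manipulable in the
sense of Definition 2 (no hypothesis on `(T,Q)` is needed). -/
theorem statement6 {Team ResS ResT ResU : Type} (W : System Team ResS ResT ResU)
    (hlin : W.linearRanked) (hS : ∀ i j, ¬ W.manipSBy i j) :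
    ¬ W.incompatible W.qualA'' := by
  rintro (⟨i, j, s', h1, h2, h3, h4, h5, h6⟩ |
    ⟨i, j, k, t', ⟨hw, hiT, hiT', hjT, hjT', hkT, hkT', hoth⟩, hni, hin⟩)
  · exact hS i j ⟨s', h1, h2, h3, h4⟩
  · apply hni
    simp only [System.qualA'', Set.mem_setOf_eq] at hin ⊢
    rcases hin with ⟨hteam, hle⟩ | ⟨w, hw1, ⟨hge, rfl⟩ | ⟨hle, hteam, heq⟩⟩
    · omega
    · exact Or.inr ⟨i, hw1, Or.inl ⟨by omega, rfl⟩⟩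
    · refine Or.inr ⟨w, hw1, Or.inr ⟨?_, hteam, hiT⟩⟩
      by_cases hwj : w = j
      · subst hwj; omega
      by_cases hwk : w = k
      · subst hwk; omega
      rw [hoth w hwj hwk]; exact hle
end

section
/- Under allocation rule 𝒜 (the current UEFA rule), the qualified set as a function of the rank Q_p(T) of the titleholder p is not monotone in the following sense: the winner r of (U,R) qualifies when Q_p(T) ≤ q−1 but does not qualify when Q_p(T) = q, even though in both cases p occupies a slot among the top q of (T,Q); consequently the identity of the beneficiary of the vacancy changes discontinuously at Q_p(T) = q. -/
/-- under the UEFA rule `𝒜`, the qualified set is not monotone in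
the rank `Q_p(T)` of the titleholder `p`: there are rankings `t`, `t'` of `(T,Q)`
differing only in the position of `p` (`Q_p(t) = q−1` versus `Q_p(t') = q`) such
that `r` qualifies under `t` but not under `t'`. -/
theorem statement8 :
    ∃ (Team ResS ResT ResU : Type) (W : System Team ResS ResT ResU) (t t' : ResT),
      W.Q t W.p + 1 = W.q ∧ W.Q t' W.p = W.q ∧
      (∀ m, m ≠ W.p → W.Q t m = W.Q t' m) ∧
      W.r ∈ W.qualA W.S t ∧ W.r ∉ W.qualA W.S t' := by
  refine ⟨ℕ, ℕ, Bool, ℕ,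
    { P := fun _ i => i + 1
      Q := fun b i => if i = 0 then (if b then 1 else 2) else i + 1
      R := fun _ i => i
      worseS := fun _ _ _ => True
      worseT := fun _ _ _ => True
      teamsS := Set.univ
      teamsT := {0, 2, 3}
      teamsU := {1}
      S := 0, T := true, U := 0, q := 2, p := 0, r := 1
      hp_win := rfl
      hp_T := by simp
      hp_notU := by simp
      hr_win := rfl
      hr_U := by simp
      hr_notT := by simp },
    true, false, ?_, ?_, ?_, ?_, ?_⟩
  · rfl
  · rfl
  · intro m hm; simp [hm]
  · exact Or.inr ⟨0, rfl, Or.inr (Or.inl ⟨by norm_num, rfl⟩)⟩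
  · rintro (⟨h, -⟩ | ⟨w, hw, h⟩)
    · simp at h
    · have hw0 : w = 0 := Nat.succ_injective hw
      subst hw0
      rcases h with ⟨h1, -⟩ | ⟨h1, -⟩ | ⟨-, h2, -⟩
      · simp at h1
      · simp at h1
      · simp at h2
end

section
/- In a round-robin tournament with at least three teams ranked by points (win = 3, draw = 1, loss = 0, ties broken by a fixed strict priority), there exists a set of results and a team i such that i can deliberately lose one of its matches, keep its own final rank unchanged, and thereby reverse the final ranks of two teams both ranked strictly above i. -/
open Finset

/-- Valid results of a round-robin tournament on `n` teams: each pair of distinct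
teams plays exactly one match, awarding points `(3,0)` (win), `(1,1)` (draw) or
`(0,3)` (loss); `pts i j` is the number of points `i` collects from its match
against `j`. -/
def ValidRR {n : ℕ} (pts : Fin n → Fin n → ℕ) : Prop :=
  (∀ i, pts i i = 0) ∧ ∀ i j, i ≠ j →
    ((pts i j = 3 ∧ pts j i = 0) ∨ (pts i j = 1 ∧ pts j i = 1) ∨
      (pts i j = 0 ∧ pts j i = 3))

/-- Total score of team `i`. -/
def rrScore {n : ℕ} (pts : Fin n → Fin n → ℕ) (i : Fin n) : ℕ := ∑ j, pts i j

/-- Final rank of team `i`: decreasing order of scores, ties broken by the fixed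
strict priority given by the order on `Fin n`. -/
def rrRank {n : ℕ} (pts : Fin n → Fin n → ℕ) (i : Fin n) : ℕ :=
  1 + (Finset.univ.filter
        (fun j => rrScore pts i < rrScore pts j ∨
          (rrScore pts j = rrScore pts i ∧ j < i))).card

/-- `pts'` is obtained from `pts` by a deliberate loss of team `i`: exactly one
match of `i` (a win or a draw) is changed to a loss, all other results unchanged. -/
def DeliberateLoss {n : ℕ} (pts pts' : Fin n → Fin n → ℕ) (i : Fin n) : Prop :=
  ∃ m, m ≠ i ∧ 1 ≤ pts i m ∧ pts' i m = 0 ∧ pts' m i = 3 ∧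
    ∀ a b : Fin n, ¬ (a = i ∧ b = m) → ¬ (a = m ∧ b = i) → pts' a b = pts a b

/-! ### Auxiliary construction

Teams: `0` (call it `j`), `1` (call it `k`), the last team `n-1` (call it `i`),
and "mid" teams `2, …, n-2`.  Results: a cycle `1` beats `0`, `0` beats `n-1`,
`n-1` beats `1`; both `0` and `1` beat all mid teams; mid teams beat `n-1` and
draw with each other.  Scores: `0` and `1` get `3(n-2)`, each mid gets `n-1`,
and `n-1` gets `3`.  Ranks: `0 ↦ 1`, `1 ↦ 2`, `n-1 ↦ n`.

Then `n-1` deliberately loses its win against `1`.  New scores: `1` gets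
`3n-3`, `0` keeps `3(n-2)`, mids keep `n-1`, and `n-1` gets `0`.  New ranks:
`1 ↦ 1`, `0 ↦ 2`, `n-1 ↦ n`. -/

def Ppts (n : ℕ) (a b : Fin n) : ℕ :=
  if a = b then 0
  else if a.val = 0 then (if b.val = 1 then 0 else 3)
  else if b.val = 0 then (if a.val = 1 then 3 else 0)
  else if a.val = 1 then (if b.val = n - 1 then 0 else 3)
  else if b.val = 1 then (if a.val = n - 1 then 3 else 0)
  else if a.val = n - 1 then 0
  else if b.val = n - 1 then 3
  else 1

def Ppts' (n : ℕ) (a b : Fin n) : ℕ :=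
  if a.val = 1 ∧ b.val = n - 1 then 3
  else if a.val = n - 1 ∧ b.val = 1 then 0
  else Ppts n a b

lemma ppts'_eq {n : ℕ} (a b : Fin n) (h1 : ¬(a.val = 1 ∧ b.val = n - 1))
    (h2 : ¬(a.val = n - 1 ∧ b.val = 1)) : Ppts' n a b = Ppts n a b := by
  simp only [Ppts', if_neg h1, if_neg h2]

lemma valid_ppts (n : ℕ) (hn : 3 ≤ n) : ValidRR (Ppts n) := by
  constructor
  · intro i; simp [Ppts]
  · intro a b hab
    have h : a.val ≠ b.val := fun h => hab (Fin.ext h)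
    simp only [Ppts, Fin.ext_iff]
    split_ifs <;> (try contradiction) <;> omega

lemma valid_ppts' (n : ℕ) (hn : 3 ≤ n) : ValidRR (Ppts' n) := by
  obtain ⟨hd, ho⟩ := valid_ppts n hn
  constructor
  · intro i
    rw [ppts'_eq i i (by omega) (by omega)]
    exact hd i
  · intro a b hab
    have h : a.val ≠ b.val := fun h => hab (Fin.ext h)
    by_cases hc1 : a.val = 1 ∧ b.val = n - 1
    · left
      refine ⟨by simp [Ppts', hc1], ?_⟩
      show Ppts' n b a = 0
      simp only [Ppts']
      rw [if_neg (by omega), if_pos ⟨hc1.2, hc1.1⟩]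
    · by_cases hc2 : a.val = n - 1 ∧ b.val = 1
      · right; right
        refine ⟨?_, ?_⟩
        · show Ppts' n a b = 0
          simp only [Ppts']
          rw [if_neg (by omega), if_pos hc2]
        · show Ppts' n b a = 3
          simp only [Ppts']
          rw [if_pos ⟨hc2.2, hc2.1⟩]
      · rw [ppts'_eq a b hc1 hc2, ppts'_eq b a (by omega) (by omega)]
        exact ho a b hab

lemma sum_eq_of_except {n : ℕ} (f : Fin n → ℕ) (s : Finset (Fin n)) (c : ℕ)
    (h : ∀ x ∉ s, f x = c) :
    ∑ x, f x = (∑ x ∈ s, f x) + c * (n - s.card) := by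
  have hsub : s ⊆ univ := Finset.subset_univ s
  rw [← Finset.sum_sdiff hsub, Finset.sum_congr rfl (fun x hx => h x (Finset.mem_sdiff.mp hx).2),
    Finset.sum_const, smul_eq_mul, Finset.card_sdiff_of_subset hsub, Finset.card_univ, Fintype.card_fin]
  ring

lemma score_ppts {n : ℕ} (hn : 3 ≤ n) (x : Fin n) :
    rrScore (Ppts n) x = if x.val = n - 1 then 3
      else if x.val ≤ 1 then 3 * (n - 2) else n - 1 := by
  have hx := x.isLt
  unfold rrScore
  by_cases h1 : x.val = n - 1
  · rw [if_pos h1, sum_eq_of_except _ ({x, ⟨1, by omega⟩} : Finset (Fin n)) 0 ?_]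
    · rw [Finset.sum_pair (by simp [Fin.ext_iff]; omega)]
      have ha : Ppts n x x = 0 := by simp [Ppts]
      have hb : Ppts n x ⟨1, by omega⟩ = 3 := by
        simp only [Ppts, Fin.ext_iff]; split_ifs <;> (try contradiction) <;> omega
      rw [ha, hb]; simp
    · intro b hb
      simp only [Finset.mem_insert, Finset.mem_singleton, Fin.ext_iff] at hb
      push_neg at hb
      simp only [Ppts, Fin.ext_iff]
      split_ifs <;> (try contradiction) <;> omega
  · rw [if_neg h1]
    by_cases h2 : x.val ≤ 1
    · rw [if_pos h2]
      by_cases h0 : x.val = 0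
      · rw [sum_eq_of_except _ ({x, ⟨1, by omega⟩} : Finset (Fin n)) 3 ?_]
        · rw [Finset.sum_pair (by simp [Fin.ext_iff]; omega)]
          have ha : Ppts n x x = 0 := by simp [Ppts]
          have hb : Ppts n x ⟨1, by omega⟩ = 0 := by
            simp only [Ppts, Fin.ext_iff]; split_ifs <;> (try contradiction) <;> omega
          rw [ha, hb, Finset.card_pair (by simp [Fin.ext_iff]; omega)]
          omega
        · intro b hb
          simp only [Finset.mem_insert, Finset.mem_singleton, Fin.ext_iff] at hb
          push_neg at hb
          simp only [Ppts, Fin.ext_iff]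
          split_ifs <;> (try contradiction) <;> omega
      · have h2' : x.val = 1 := by omega
        rw [sum_eq_of_except _ ({x, ⟨n - 1, by omega⟩} : Finset (Fin n)) 3 ?_]
        · rw [Finset.sum_pair (by simp [Fin.ext_iff]; omega)]
          have ha : Ppts n x x = 0 := by simp [Ppts]
          have hb : Ppts n x ⟨n - 1, by omega⟩ = 0 := by
            simp only [Ppts, Fin.ext_iff]; split_ifs <;> (try contradiction) <;> omega
          rw [ha, hb, Finset.card_pair (by simp [Fin.ext_iff]; omega)]
          omega
        · intro b hb
          simp only [Finset.mem_insert, Finset.mem_singleton, Fin.ext_iff] at hb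
          push_neg at hb
          simp only [Ppts, Fin.ext_iff]
          split_ifs <;> (try contradiction) <;> omega
    · rw [if_neg h2]
      have hmid : 2 ≤ x.val ∧ x.val ≤ n - 2 := by omega
      rw [sum_eq_of_except _
        ({⟨0, by omega⟩, ⟨1, by omega⟩, ⟨n - 1, by omega⟩, x} : Finset (Fin n)) 1 ?_]
      · rw [Finset.sum_insert (by simp [Fin.ext_iff]; omega),
          Finset.sum_insert (by simp [Fin.ext_iff]; omega),
          Finset.sum_pair (by simp [Fin.ext_iff]; omega)]
        have ha : Ppts n x ⟨0, by omega⟩ = 0 := by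
          simp only [Ppts, Fin.ext_iff]; split_ifs <;> (try contradiction) <;> omega
        have hb : Ppts n x ⟨1, by omega⟩ = 0 := by
          simp only [Ppts, Fin.ext_iff]; split_ifs <;> (try contradiction) <;> omega
        have hc : Ppts n x ⟨n - 1, by omega⟩ = 3 := by
          simp only [Ppts, Fin.ext_iff]; split_ifs <;> (try contradiction) <;> omega
        have hd : Ppts n x x = 0 := by simp [Ppts]
        rw [ha, hb, hc, hd]
        have hcard : ({⟨0, by omega⟩, ⟨1, by omega⟩, ⟨n - 1, by omega⟩, x} :
            Finset (Fin n)).card = 4 := by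
          rw [Finset.card_insert_of_notMem (by simp [Fin.ext_iff]; omega),
            Finset.card_insert_of_notMem (by simp [Fin.ext_iff]; omega),
            Finset.card_pair (by simp [Fin.ext_iff]; omega)]
        rw [hcard]
        omega
      · intro b hb
        simp only [Finset.mem_insert, Finset.mem_singleton, Fin.ext_iff] at hb
        push_neg at hb
        simp only [Ppts, Fin.ext_iff]
        split_ifs <;> (try contradiction) <;> omega

lemma score_ppts' {n : ℕ} (hn : 3 ≤ n) (x : Fin n) :
    rrScore (Ppts' n) x = if x.val = n - 1 then 0
      else if x.val = 1 then 3 * n - 3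
      else if x.val = 0 then 3 * (n - 2) else n - 1 := by
  have hx := x.isLt
  by_cases h1 : x.val = n - 1
  · rw [if_pos h1]
    unfold rrScore
    apply Finset.sum_eq_zero
    intro b _
    simp only [Ppts', Ppts, Fin.ext_iff]
    split_ifs <;> (try contradiction) <;> omega
  · rw [if_neg h1]
    by_cases h2 : x.val = 1
    · rw [if_pos h2]
      unfold rrScore
      rw [sum_eq_of_except _ ({x} : Finset (Fin n)) 3 ?_]
      · rw [Finset.sum_singleton]
        have ha : Ppts' n x x = 0 := by
          rw [ppts'_eq x x (by omega) (by omega)]; simp [Ppts]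
        rw [ha, Finset.card_singleton]
        omega
      · intro b hb
        simp only [Finset.mem_singleton, Fin.ext_iff] at hb
        simp only [Ppts', Ppts, Fin.ext_iff]
        split_ifs <;> (try contradiction) <;> omega
    · have hsame : rrScore (Ppts' n) x = rrScore (Ppts n) x := by
        unfold rrScore
        exact Finset.sum_congr rfl fun b _ => ppts'_eq x b (by omega) (by omega)
      rw [hsame, score_ppts hn x]
      split_ifs <;> (try contradiction) <;> omega

lemma rrRank_eq {n : ℕ} (pts : Fin n → Fin n → ℕ) (i : Fin n) (s : Finset (Fin n))
    (h : ∀ x, (rrScore pts i < rrScore pts x ∨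
      (rrScore pts x = rrScore pts i ∧ x < i)) ↔ x ∈ s) :
    rrRank pts i = 1 + s.card := by
  unfold rrRank
  have hs : (Finset.univ.filter
      (fun j => rrScore pts i < rrScore pts j ∨
        (rrScore pts j = rrScore pts i ∧ j < i))) = s := by
    ext x
    simp only [Finset.mem_filter, Finset.mem_univ, true_and]
    exact h x
  rw [hs]

/-- in a round-robin tournament with at least three teams there
exist results `pts` and a team `i` such that `i` can deliberately lose one of its
matches, keep its own final rank unchanged, and thereby reverse the final ranks
of two teams `j`, `k` both ranked strictly above `i`. -/
theorem statement10 (n : ℕ) (hn : 3 ≤ n) :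
    ∃ (pts pts' : Fin n → Fin n → ℕ) (i j k : Fin n),
      ValidRR pts ∧ ValidRR pts' ∧ DeliberateLoss pts pts' i ∧
      rrRank pts' i = rrRank pts i ∧
      rrRank pts j < rrRank pts k ∧ rrRank pts k < rrRank pts i ∧
      rrRank pts' j = rrRank pts k ∧ rrRank pts' k = rrRank pts j := by
  set e0 : Fin n := ⟨0, by omega⟩ with he0
  set e1 : Fin n := ⟨1, by omega⟩ with he1
  set ei : Fin n := ⟨n - 1, by omega⟩ with hei
  have he0v : e0.val = 0 := rfl
  have he1v : e1.val = 1 := rfl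
  have heiv : ei.val = n - 1 := rfl
  -- ranks before
  have rank0 : rrRank (Ppts n) e0 = 1 + (∅ : Finset (Fin n)).card := by
    apply rrRank_eq
    intro x
    have hx := x.isLt
    rw [score_ppts hn x, score_ppts hn e0, he0v]
    simp only [Finset.notMem_empty, iff_false, Fin.lt_def, he0v]
    split_ifs <;> (try contradiction) <;> omega
  have rank1 : rrRank (Ppts n) e1 = 1 + ({e0} : Finset (Fin n)).card := by
    apply rrRank_eq
    intro x
    have hx := x.isLt
    rw [score_ppts hn x, score_ppts hn e1, he1v]
    simp only [Finset.mem_singleton, Fin.ext_iff, he0v, Fin.lt_def, he1v]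
    split_ifs <;> (try contradiction) <;> omega
  have ranki : rrRank (Ppts n) ei = 1 + (Finset.univ.erase ei).card := by
    apply rrRank_eq
    intro x
    have hx := x.isLt
    rw [score_ppts hn x, score_ppts hn ei, heiv]
    simp only [Finset.mem_erase, Finset.mem_univ, and_true, ne_eq, Fin.ext_iff, heiv,
      Fin.lt_def]
    split_ifs <;> (try contradiction) <;> omega
  -- ranks after
  have rank0' : rrRank (Ppts' n) e0 = 1 + ({e1} : Finset (Fin n)).card := by
    apply rrRank_eq
    intro x
    have hx := x.isLt
    rw [score_ppts' hn x, score_ppts' hn e0, he0v]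
    simp only [Finset.mem_singleton, Fin.ext_iff, he1v, Fin.lt_def, he0v]
    split_ifs <;> (try contradiction) <;> omega
  have rank1' : rrRank (Ppts' n) e1 = 1 + (∅ : Finset (Fin n)).card := by
    apply rrRank_eq
    intro x
    have hx := x.isLt
    rw [score_ppts' hn x, score_ppts' hn e1, he1v]
    simp only [Finset.notMem_empty, iff_false, Fin.lt_def, he1v]
    split_ifs <;> (try contradiction) <;> omega
  have ranki' : rrRank (Ppts' n) ei = 1 + (Finset.univ.erase ei).card := by
    apply rrRank_eq
    intro x
    have hx := x.isLt
    rw [score_ppts' hn x, score_ppts' hn ei, heiv]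
    simp only [Finset.mem_erase, Finset.mem_univ, and_true, ne_eq, Fin.ext_iff, heiv,
      Fin.lt_def]
    split_ifs <;> (try contradiction) <;> omega
  have hcard : (Finset.univ.erase ei).card = n - 1 := by
    rw [Finset.card_erase_of_mem (Finset.mem_univ ei), Finset.card_univ, Fintype.card_fin]
  refine ⟨Ppts n, Ppts' n, ei, e0, e1, valid_ppts n hn, valid_ppts' n hn, ?_, ?_, ?_, ?_, ?_, ?_⟩
  · -- DeliberateLoss
    refine ⟨e1, ?_, ?_, ?_, ?_, ?_⟩
    · intro h
      have := congrArg Fin.val h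
      rw [he1v, heiv] at this
      omega
    · have : Ppts n ei e1 = 3 := by
        simp only [Ppts, Fin.ext_iff, he1v, heiv]
        split_ifs <;> (try contradiction) <;> omega
      omega
    · show Ppts' n ei e1 = 0
      simp only [Ppts']
      rw [if_neg (by omega), if_pos (by exact ⟨rfl, rfl⟩)]
    · show Ppts' n e1 ei = 3
      simp only [Ppts']
      rw [if_pos (by exact ⟨rfl, rfl⟩)]
    · intro a b hab1 hab2
      apply ppts'_eq
      · rintro ⟨h1, h2⟩
        exact hab2 ⟨Fin.ext (by rw [h1, he1v]), Fin.ext (by rw [h2, heiv])⟩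
      · rintro ⟨h1, h2⟩
        exact hab1 ⟨Fin.ext (by rw [h1, heiv]), Fin.ext (by rw [h2, he1v])⟩
  · rw [ranki, ranki']
  · rw [rank0, rank1]
    simp
  · rw [rank1, ranki, hcard]
    simp only [Finset.card_singleton]
    omega
  · rw [rank0', rank1]
    simp
  · rw [rank1', rank0]
end
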